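/- In the game G₄: the supremum of the leader's expected reward over all leader strategy profiles equals 1 and is attained by some leader strategy profile; however, for every memory bound b ∈ ℕ, every leader strategy profile with memory bound b gives the leader expected reward strictly less than 1. Hence an optimal leader strategy profile of G₄ requires infinite memory. -/

import Mathlib

open scoped BigOperators

/-- A multi-player discounted sum game (MDSG) on sets of players `P`,
vertices `V` and actions `A`, all required to be finite (`A` nonempty).
The `owner` of a vertex chooses the action there; `tr` is the transition
function, `rew p v a` is the reward of player `p` for taking action `a`
at vertex `v`, `init` is the initial probability distribution on the
vertices, and `disc` is the discount factor. -/
structure MDSG (P V A : Type) : Type where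
  fin_P : Finite P
  fin_V : Finite V
  fin_A : Finite A
  nonempty_A : Nonempty A
  owner : V → P
  tr : V → A → V
  rew : P → V → A → ℝ
  init : V → ℝ
  init_nonneg : ∀ v, 0 ≤ init v
  init_sum : ∑' v, init v = 1
  disc : ℝ
  disc_pos : 0 < disc
  disc_lt_one : disc < 1

/-- A pure strategy profile: given the history (the list of vertex/action pairs
seen so far) and the current vertex, the owner of the current vertex chooses
an action.  The strategy of an individual player `p` is the restriction of the
profile to the vertices owned by `p`. -/
abbrev Profile (V A : Type) : Type := List (V × A) → V → A

namespace MDSG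

variable {P V A : Type}

/-- The pair (history, current vertex) after `n` steps of the play of `σ` from `v`. -/
def histState (G : MDSG P V A) (σ : Profile V A) (v : V) : ℕ → List (V × A) × V
  | 0 => ([], v)
  | n + 1 =>
    let s := G.histState σ v n
    (s.1 ++ [(s.2, σ s.1 s.2)], G.tr s.2 (σ s.1 s.2))

/-- The vertex visited at step `n` of the play of `σ` from `v`. -/
def playV (G : MDSG P V A) (σ : Profile V A) (v : V) (n : ℕ) : V :=
  (G.histState σ v n).2

/-- The action taken at step `n` of the play of `σ` from `v`. -/
def playA (G : MDSG P V A) (σ : Profile V A) (v : V) (n : ℕ) : A :=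
  σ (G.histState σ v n).1 (G.playV σ v n)

/-- The discounted reward of player `p` on the play of `σ` from `v`. -/
noncomputable def reward (G : MDSG P V A) (p : P) (σ : Profile V A) (v : V) : ℝ :=
  ∑' i : ℕ, G.rew p (G.playV σ v i) (G.playA σ v i) * G.disc ^ i

/-- The expected reward of player `p` under the strategy profile `σ`. -/
noncomputable def ER (G : MDSG P V A) (p : P) (σ : Profile V A) : ℝ :=
  ∑' v : V, G.init v * G.reward p σ v

/-- `σ'` differs from `σ` at most in the strategy of player `p`. -/
def DiffOnly (G : MDSG P V A) (σ σ' : Profile V A) (p : P) : Prop :=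
  ∀ h v, G.owner v ≠ p → σ' h v = σ h v

/-- Nash equilibrium: no player can profit from a unilateral deviation. -/
def IsNash (G : MDSG P V A) (σ : Profile V A) : Prop :=
  ∀ p σ', G.DiffOnly σ σ' p → G.ER p σ' ≤ G.ER p σ

/-- Leader strategy profile: no player other than the leader `l` can profit
from a unilateral deviation. -/
def IsLeaderSP (G : MDSG P V A) (l : P) (σ : Profile V A) : Prop :=
  ∀ p, p ≠ l → ∀ σ', G.DiffOnly σ σ' p → G.ER p σ' ≤ G.ER p σ

/-- `σ` is a (pure) strategy profile with memory bound `b`: there is a memory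
set `M` with `|M| ≤ b`, an initial memory state, a memory update function and
a usage function producing all the actions of `σ`. -/
def MemBound (G : MDSG P V A) (σ : Profile V A) (b : ℕ) : Prop :=
  ∃ n : ℕ, n ≤ b ∧ ∃ (m₀ : Fin n) (μ : Fin n → V × A → Fin n) (u : Fin n → V → A),
    ∀ h v, σ h v = u (h.foldl μ m₀) v

/-- `σ` is memoryless (positional): actions depend only on the current vertex. -/
def Positional (G : MDSG P V A) (σ : Profile V A) : Prop :=
  ∀ h h' v, σ h v = σ h' v

open Classical in
/-- Combination of a strategy for player `p` with a joint strategy of the other players. -/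
noncomputable def combine (G : MDSG P V A) (p : P) (τp τo : Profile V A) : Profile V A :=
  fun h v => if G.owner v = p then τp h v else τo h v

/-- The lower value of player `p` at vertex `v`: the supremum over the pure
strategies of `p` of the infimum over the joint pure strategies of the other
players of the reward of `p` on the resulting play from `v`. -/
noncomputable def lowerValue (G : MDSG P V A) (p : P) (v : V) : ℝ :=
  ⨆ τp : Profile V A, ⨅ τo : Profile V A, G.reward p (G.combine p τp τo) v

/-- The upper value of player `p` at vertex `v`. -/
noncomputable def upperValue (G : MDSG P V A) (p : P) (v : V) : ℝ :=
  ⨅ τo : Profile V A, ⨆ τp : Profile V A, G.reward p (G.combine p τp τo) v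

/-- The history `h` contains a deviation from `σ` at position `i`. -/
def DeviatesAt (G : MDSG P V A) (σ : Profile V A) (h : List (V × A)) (i : ℕ) : Prop :=
  ∃ hi : i < h.length, (h.get ⟨i, hi⟩).2 ≠ σ (h.take i) (h.get ⟨i, hi⟩).1

/-- Reward-and-punish profile: on every history that deviates from the
prescribed actions, every action depends only on the current vertex and on the
identity of the first player who deviated (all players follow a fixed
positional strategy depending only on the first deviator). -/
def IsRewardPunish (G : MDSG P V A) (σ : Profile V A) : Prop :=
  ∃ punish : P → V → A, ∀ (h : List (V × A)) (i : ℕ) (hi : i < h.length),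
    G.DeviatesAt σ h i → (∀ j, j < i → ¬ G.DeviatesAt σ h j) →
    ∀ v, σ h v = punish (G.owner (h.get ⟨i, hi⟩).1) v

/-- The outcome plays of `σ` are generated with compliance memory bound `b`:
on every history on which all players have complied, the actions of `σ` are
produced by a memory structure with at most `b` states. -/
def ComplianceMemBound (G : MDSG P V A) (σ : Profile V A) (b : ℕ) : Prop :=
  ∃ n : ℕ, n ≤ b ∧ ∃ (m₀ : Fin n) (μ : Fin n → V × A → Fin n) (u : Fin n → V → A),
    ∀ h : List (V × A), (∀ i, ¬ G.DeviatesAt σ h i) →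
      ∀ v, σ h v = u (h.foldl μ m₀) v

/-- The set of stationary mixed decision vectors: an assignment of a
probability distribution over the actions to every vertex. -/
def simplexD (V A : Type) : Set (V → A → ℝ) :=
  {d | ∀ v, (∀ a, 0 ≤ d v a) ∧ ∑' a, d v a = 1}

end MDSG
namespace MDSG

/-- The game `G₄` (Figure 5 of the paper): two players `0` (player 1) and `1`
(the leader); vertices `0, 1, 2` (representing vertices 1, 2, 3), where
vertices `0` and `2` belong to player 1 and vertex `1` to the leader; actions
`Bool`.  Vertex `0`: `true` moves to `1` with rewards `(1,0)`, `false` moves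
to `2` with rewards `(0,0)`.  Vertex `2` loops with rewards `(0,0)`.
Vertex `1` has two self-loops: `true` with rewards `(-1,1)` and `false` with
rewards `(0,0)`.  Initial distribution: point mass at `0`; discount factor
`2/3`. -/
noncomputable def G4 : MDSG (Fin 2) (Fin 3) Bool where
  fin_P := inferInstance
  fin_V := inferInstance
  fin_A := inferInstance
  nonempty_A := inferInstance
  owner := fun v => if v = 1 then 1 else 0
  tr := fun v a => if v = 0 then (if a then 1 else 2) else v
  rew := fun p v a =>
    if v = 0 then (if a then (if p = 0 then 1 else 0) else 0)
    else if v = 1 then (if a then (if p = 0 then -1 else 1) else 0)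
    else 0
  init := fun v => if v = 0 then 1 else 0
  init_nonneg := by intro v; (try dsimp only); split <;> norm_num
  init_sum := by simpa using tsum_ite_eq (0 : Fin 3) (1 : ℝ)
  disc := 2 / 3
  disc_pos := by norm_num
  disc_lt_one := by norm_num

end MDSG

namespace MDSG4Aux
open MDSG Finset

lemma G4_disc : G4.disc = 2/3 := rfl

lemma rew_def (p : Fin 2) (v : Fin 3) (a : Bool) : G4.rew p v a =
    if v = 0 then (if a then (if p = 0 then 1 else 0) else 0)
    else if v = 1 then (if a then (if p = 0 then -1 else 1) else 0)
    else 0 := rfl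

lemma rew_abs : ∀ (p : Fin 2) (v : Fin 3) (a : Bool), |G4.rew p v a| ≤ 1 := by
  intro p v a
  rw [rew_def]
  split_ifs <;> norm_num

lemma summable_reward (p : Fin 2) (σ : Profile (Fin 3) Bool) (v : Fin 3) :
    Summable (fun i : ℕ => G4.rew p (G4.playV σ v i) (G4.playA σ v i) * G4.disc ^ i) := by
  have hg : Summable (fun k : ℕ => ((2:ℝ)/3)^k) :=
    summable_geometric_of_lt_one (by norm_num) (by norm_num)
  apply Summable.of_norm_bounded hg
  intro i
  rw [Real.norm_eq_abs, abs_mul, G4_disc, abs_pow]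
  have habs : |(2:ℝ)/3| = 2/3 := by rw [abs_of_nonneg] <;> norm_num
  rw [habs]
  calc |G4.rew p (G4.playV σ v i) (G4.playA σ v i)| * ((2:ℝ)/3) ^ i
      ≤ 1 * ((2:ℝ)/3) ^ i :=
        mul_le_mul_of_nonneg_right (rew_abs _ _ _) (by positivity)
    _ = ((2:ℝ)/3)^i := one_mul _

lemma ER_eq (p : Fin 2) (σ : Profile (Fin 3) Bool) : G4.ER p σ = G4.reward p σ 0 := by
  rw [ER, tsum_fintype, Fin.sum_univ_three]
  show (1:ℝ) * _ + (0:ℝ) * _ + (0:ℝ) * _ = _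
  ring

lemma playV_zero (σ : Profile (Fin 3) Bool) : G4.playV σ 0 0 = 0 := rfl

lemma playA_zero (σ : Profile (Fin 3) Bool) : G4.playA σ 0 0 = σ [] 0 := rfl

lemma hist_length (σ : Profile (Fin 3) Bool) (v : Fin 3) :
    ∀ k, (G4.histState σ v k).1.length = k := by
  intro k
  induction k with
  | zero => rfl
  | succ n ih => simp [histState, ih]

lemma playV_caseA (σ : Profile (Fin 3) Bool) (h : σ [] 0 = false) :
    ∀ k, G4.playV σ 0 (k+1) = 2 := by
  intro k
  induction k with
  | zero =>
    show G4.tr 0 (σ [] 0) = 2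
    rw [h]; rfl
  | succ n ih =>
    show G4.tr (G4.playV σ 0 (n+1)) _ = 2
    rw [ih]
    rfl

lemma playV_caseB (σ : Profile (Fin 3) Bool) (h : σ [] 0 = true) :
    ∀ k, G4.playV σ 0 (k+1) = 1 := by
  intro k
  induction k with
  | zero =>
    show G4.tr 0 (σ [] 0) = 1
    rw [h]; rfl
  | succ n ih =>
    show G4.tr (G4.playV σ 0 (n+1)) _ = 1
    rw [ih]
    rfl

lemma reward_caseA (p : Fin 2) (σ : Profile (Fin 3) Bool) (h : σ [] 0 = false) :
    G4.reward p σ 0 = 0 := by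
  rw [reward]
  have hz : ∀ i : ℕ, G4.rew p (G4.playV σ 0 i) (G4.playA σ 0 i) * G4.disc ^ i = 0 := by
    intro i
    match i with
    | 0 =>
      rw [playV_zero, playA_zero, h, rew_def]
      norm_num
    | (k+1) =>
      rw [playV_caseA σ h k, rew_def]
      simp
  exact (tsum_congr hz).trans tsum_zero

/-- The leader's on-path discounted gain. -/
noncomputable def L (σ : Profile (Fin 3) Bool) : ℝ :=
  ∑' k : ℕ, (if G4.playA σ 0 (k+1) then ((2:ℝ)/3)^(k+1) else 0)

lemma summable_bool' (s : ℕ → Bool) :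
    Summable (fun k : ℕ => if s k then ((2:ℝ)/3)^k else 0) := by
  have hg : Summable (fun k : ℕ => ((2:ℝ)/3)^k) :=
    summable_geometric_of_lt_one (by norm_num) (by norm_num)
  refine Summable.of_nonneg_of_le (fun k => ?_) (fun k => ?_) hg
  · split <;> positivity
  · split
    · exact le_rfl
    · positivity

lemma reward_leader_caseB (σ : Profile (Fin 3) Bool) (h : σ [] 0 = true) :
    G4.reward 1 σ 0 = L σ := by
  rw [reward, Summable.tsum_eq_zero_add (summable_reward 1 σ 0)]
  have h0 : G4.rew 1 (G4.playV σ 0 0) (G4.playA σ 0 0) * G4.disc ^ 0 = 0 := by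
    rw [playV_zero, playA_zero, h, rew_def]
    norm_num
  rw [h0, zero_add, L]
  apply tsum_congr
  intro k
  rw [playV_caseB σ h k, G4_disc, rew_def]
  simp

lemma reward_p0_caseB (σ : Profile (Fin 3) Bool) (h : σ [] 0 = true) :
    G4.reward 0 σ 0 = 1 - L σ := by
  rw [reward, Summable.tsum_eq_zero_add (summable_reward 0 σ 0)]
  have h0 : G4.rew 0 (G4.playV σ 0 0) (G4.playA σ 0 0) * G4.disc ^ 0 = 1 := by
    rw [playV_zero, playA_zero, h, rew_def]
    norm_num
  rw [h0]
  have h1 : (∑' k : ℕ, G4.rew 0 (G4.playV σ 0 (k+1)) (G4.playA σ 0 (k+1)) * G4.disc ^ (k+1)) = - L σ := by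
    rw [L, ← tsum_neg]
    apply tsum_congr
    intro k
    rw [playV_caseB σ h k, G4_disc, rew_def]
    simp
    split <;> simp
  rw [h1]
  ring

end MDSG4Aux

namespace MDSG4Aux
open MDSG Finset

lemma key (s : ℕ → Bool) (i q : ℕ) (hi : 1 ≤ i) (hq : 1 ≤ q)
    (hper : ∀ k, i ≤ k → s (k + q) = s k) :
    (∑' k : ℕ, (if s (k+1) then ((2:ℝ)/3)^(k+1) else 0)) ≠ 1 := by
  intro h
  set f : ℕ → ℝ := fun k => if s k then ((2:ℝ)/3)^k else 0 with hf
  have hsf : Summable f := summable_bool' s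
  have hs1 : Summable (fun k => f (k+1)) := (summable_nat_add_iff 1).2 hsf
  have hsi : Summable (fun k => f (k+i)) := (summable_nat_add_iff i).2 hsf
  set F : ℝ := ∑ k ∈ range (i-1), f (k+1) with hF
  set T : ℝ := ∑' k : ℕ, f (k+i) with hT
  have h1 : F + T = 1 := by
    have := Summable.sum_add_tsum_nat_add (f := fun k => f (k+1)) (i-1) hs1
    rw [h] at this
    rw [hF, hT, ← this]
    congr 1
    apply tsum_congr; intro k; congr 1; omega
  set B : ℝ := ∑ j ∈ range q, f (j+i) with hB
  have h4 : ∑' k : ℕ, f ((k+q)+i) = ((2:ℝ)/3)^q * T := by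
    rw [hT, ← tsum_mul_left]
    apply tsum_congr; intro k
    have hk : s (k + q + i) = s (k + i) := by
      have := hper (k + i) (by omega); rw [← this]; congr 1; omega
    simp only [hf]
    rw [hk]
    split
    · rw [show k + q + i = q + (k + i) by omega, pow_add]
    · ring
  have h2 : B + ((2:ℝ)/3)^q * T = T := by
    have h3 := Summable.sum_add_tsum_nat_add (f := fun k => f (k+i)) q hsi
    rw [← h4, hB, hT]
    exact h3
  set N : ℤ := 3^(i-1) - ∑ k ∈ range (i-1), (if s (k+1) then 2^(k+1) * 3^(i-2-k) else 0) with hN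
  set M : ℤ := ∑ j ∈ range q, (if s (j+i) then 2^(j+i) * 3^(q-1-j) else 0) with hM
  have hNr : (N : ℝ) = (1 - F) * 3^(i-1) := by
    rw [hN]
    push_cast
    rw [sub_mul, one_mul, hF, Finset.sum_mul]
    congr 1
    apply Finset.sum_congr rfl
    intro k hk
    simp only [Finset.mem_range] at hk
    simp only [hf, ite_mul, zero_mul, apply_ite (Int.cast : ℤ → ℝ)]
    push_cast
    split
    · rw [show i - 1 = (k+1) + (i-2-k) by omega, pow_add, div_pow]
      field_simp
      rw [pow_add, pow_succ]; ring
    · rfl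
  have hMr : (M : ℝ) = B * 3^(i+q-1) := by
    rw [hM]
    push_cast
    rw [hB, Finset.sum_mul]
    apply Finset.sum_congr rfl
    intro j hj
    simp only [Finset.mem_range] at hj
    simp only [hf, ite_mul, zero_mul, apply_ite (Int.cast : ℤ → ℝ)]
    push_cast
    split
    · rw [show i + q - 1 = (j+i) + (q-1-j) by omega, pow_add, div_pow]
      field_simp
      rw [pow_add, pow_add]; ring
    · rfl
  have heq : N * (3^q - 2^q) = M := by
    have hreal : (N : ℝ) * ((3:ℝ)^q - 2^q) = (M : ℝ) := by
      have hT1 : T = 1 - F := by linarith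
      have hBm : B = (1 - F) * (1 - ((2:ℝ)/3)^q) := by
        rw [← hT1]; nlinarith [h2]
      have h23 : ((2:ℝ)/3)^q * 3^q = 2^q := by
        rw [div_pow]; field_simp
      have h3e : (3:ℝ)^(i+q-1) = 3^(i-1) * 3^q := by
        rw [← pow_add]; congr 1; omega
      rw [hNr, hMr, hBm, h3e, ← h23]
      ring
    exact_mod_cast hreal
  have hNodd : Odd N := by
    rw [hN, Int.odd_sub]
    constructor
    · intro _
      apply even_iff_two_dvd.mpr
      apply Finset.dvd_sum
      intro k _
      split
      · exact Dvd.dvd.mul_right (dvd_pow_self 2 (by omega)) _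
      · exact dvd_zero 2
    · intro _; exact Odd.pow (by decide)
  have hQodd : Odd ((3:ℤ)^q - 2^q) := by
    rw [Int.odd_sub]
    constructor
    · intro _
      exact even_iff_two_dvd.mpr (dvd_pow_self 2 (by omega))
    · intro _; exact Odd.pow (by decide)
  have hMeven : Even M := by
    apply even_iff_two_dvd.mpr
    rw [hM]
    apply Finset.dvd_sum
    intro j _
    split
    · exact Dvd.dvd.mul_right (dvd_pow_self 2 (by omega)) _
    · exact dvd_zero 2
  have : Odd M := heq ▸ hNodd.mul hQodd
  exact (Int.not_odd_iff_even.mpr hMeven) this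

/-! ### ER corollaries -/

lemma ER_caseA (p : Fin 2) (σ : Profile (Fin 3) Bool) (h : σ [] 0 = false) :
    G4.ER p σ = 0 := by rw [ER_eq, reward_caseA p σ h]

lemma ER1_caseB (σ : Profile (Fin 3) Bool) (h : σ [] 0 = true) :
    G4.ER 1 σ = L σ := by rw [ER_eq, reward_leader_caseB σ h]

lemma ER0_caseB (σ : Profile (Fin 3) Bool) (h : σ [] 0 = true) :
    G4.ER 0 σ = 1 - L σ := by rw [ER_eq, reward_p0_caseB σ h]

lemma owner_ne_zero {v : Fin 3} (hv : G4.owner v ≠ 0) : v = 1 := by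
  by_contra hne
  exact hv (if_neg hne)

lemma L_le_one (σ : Profile (Fin 3) Bool) (hlsp : G4.IsLeaderSP 1 σ)
    (h : σ [] 0 = true) : L σ ≤ 1 := by
  set σ' : Profile (Fin 3) Bool := fun h v => if v = 1 then σ h v else false with hσ'
  have hdiff : G4.DiffOnly σ σ' 0 := by
    intro h v hv
    have hv1 : v = 1 := owner_ne_zero hv
    simp [hσ', hv1]
  have h0 : G4.ER 0 σ' ≤ G4.ER 0 σ := hlsp 0 (by decide) σ' hdiff
  have hA : σ' [] 0 = false := by simp [hσ']
  rw [ER_caseA 0 σ' hA, ER0_caseB σ h] at h0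
  linarith

lemma ER1_le_one (σ : Profile (Fin 3) Bool) (hlsp : G4.IsLeaderSP 1 σ) :
    G4.ER 1 σ ≤ 1 := by
  cases hb : σ [] 0 with
  | false => rw [ER_caseA 1 σ hb]; norm_num
  | true => rw [ER1_caseB σ hb]; exact L_le_one σ hlsp hb

/-! ### Greedy optimal strategy -/

noncomputable def grem : ℕ → ℝ
  | 0 => 1
  | (k+1) => if ((2:ℝ)/3)^(k+1) ≤ grem k then grem k - ((2:ℝ)/3)^(k+1) else grem k

open Classical in
noncomputable def gs : ℕ → Bool
  | 0 => false
  | (k+1) => if ((2:ℝ)/3)^(k+1) ≤ grem k then true else false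

lemma grem_succ (k : ℕ) : grem (k+1) =
    if ((2:ℝ)/3)^(k+1) ≤ grem k then grem k - ((2:ℝ)/3)^(k+1) else grem k := rfl

open Classical in
lemma gs_succ (k : ℕ) : gs (k+1) = if ((2:ℝ)/3)^(k+1) ≤ grem k then true else false := rfl

lemma grem_bounds : ∀ k, 0 ≤ grem k ∧ grem k ≤ ((2:ℝ)/3)^k := by
  intro k
  induction k with
  | zero => norm_num [grem]
  | succ n ih =>
    obtain ⟨h0, h1⟩ := ih
    rw [grem_succ]
    have hp : ((2:ℝ)/3)^(n+1) = ((2:ℝ)/3)^n * (2/3) := pow_succ _ _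
    have hpn : (0:ℝ) ≤ ((2:ℝ)/3)^n := by positivity
    split_ifs with hc
    · constructor <;> linarith
    · constructor <;> linarith
  
lemma grem_partial : ∀ n, ∑ k ∈ range n, (if gs (k+1) then ((2:ℝ)/3)^(k+1) else 0) = 1 - grem n := by
  intro n
  induction n with
  | zero => simp [grem]
  | succ m ih =>
    rw [Finset.sum_range_succ, ih, gs_succ, grem_succ]
    by_cases hc : ((2:ℝ)/3)^(m+1) ≤ grem m
    · rw [if_pos hc, if_pos hc]
      rw [if_pos (rfl : (true:Bool) = true)]
      ring
    · rw [if_neg hc, if_neg hc]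
      simp

set_option maxHeartbeats 1000000 in
lemma gs_sum : ∑' k : ℕ, (if gs (k+1) then ((2:ℝ)/3)^(k+1) else 0) = 1 := by
  have hsum : Summable (fun k : ℕ => if gs (k+1) then ((2:ℝ)/3)^(k+1) else 0) :=
    (summable_nat_add_iff 1).2 (summable_bool' gs)
  have htend : Filter.Tendsto (fun n => ∑ k ∈ range n, (if gs (k+1) then ((2:ℝ)/3)^(k+1) else 0))
      Filter.atTop (nhds 1) := by
    have hrw : (fun n => ∑ k ∈ range n, (if gs (k+1) then ((2:ℝ)/3)^(k+1) else 0))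
        = fun n => 1 - grem n := funext grem_partial
    rw [hrw]
    have hg : Filter.Tendsto grem Filter.atTop (nhds 0) := by
      apply squeeze_zero (fun n => (grem_bounds n).1) (fun n => (grem_bounds n).2)
      exact tendsto_pow_atTop_nhds_zero_of_lt_one (by norm_num) (by norm_num)
    simpa using Filter.Tendsto.sub (tendsto_const_nhds (x := (1:ℝ))) hg
  exact ((Summable.hasSum_iff_tendsto_nat hsum).2 htend).tsum_eq

noncomputable def σstar : Profile (Fin 3) Bool :=
  fun h v => if v = 0 then true else if v = 1 then gs h.length else false

lemma σstar_zero : σstar [] 0 = true := rfl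

lemma playA_agree (σ' : Profile (Fin 3) Bool) (hag : ∀ h, σ' h 1 = σstar h 1)
    (htrue : σ' [] 0 = true) (k : ℕ) :
    G4.playA σ' 0 (k+1) = gs (k+1) := by
  show σ' (G4.histState σ' 0 (k+1)).1 (G4.playV σ' 0 (k+1)) = _
  rw [playV_caseB σ' htrue k, hag]
  show (if (1:Fin 3) = 0 then true else if (1:Fin 3) = 1 then gs _ else false) = _
  rw [if_neg (by decide), if_pos rfl, hist_length]

lemma L_agree (σ' : Profile (Fin 3) Bool) (hag : ∀ h, σ' h 1 = σstar h 1)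
    (htrue : σ' [] 0 = true) : L σ' = 1 := by
  rw [L, ← gs_sum]
  apply tsum_congr
  intro k
  rw [playA_agree σ' hag htrue k]

lemma L_σstar : L σstar = 1 :=
  L_agree σstar (fun _ => rfl) σstar_zero

lemma lsp_σstar : G4.IsLeaderSP 1 σstar := by
  intro p hp σ' hdiff
  have hp0 : p = 0 := by
    fin_cases p
    · rfl
    · exact absurd rfl hp
  subst hp0
  have hag : ∀ h, σ' h 1 = σstar h 1 := by
    intro h
    refine hdiff h 1 ?_
    show (if (1:Fin 3) = 1 then (1:Fin 2) else 0) ≠ 0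
    rw [if_pos rfl]
    decide
  cases hb : σ' [] 0 with
  | false =>
    rw [ER_caseA 0 σ' hb, ER0_caseB σstar σstar_zero, L_σstar]
    norm_num
  | true =>
    rw [ER0_caseB σ' hb, ER0_caseB σstar σstar_zero, L_σstar, L_agree σ' hag hb]

/-! ### Memory argument -/

lemma memory_L_ne_one (b : ℕ) (σ : Profile (Fin 3) Bool) (htrue : σ [] 0 = true)
    (hmem : G4.MemBound σ b) : L σ ≠ 1 := by
  obtain ⟨n, hnb, m₀, μ, u, hu⟩ := hmem
  set g : Fin n → Fin n := fun m => μ m (1, u m 1) with hg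
  set m1 : Fin n := List.foldl μ m₀ (G4.histState σ 0 1).1 with hm1
  have hv : ∀ e : ℕ, (G4.histState σ 0 (1+e)).2 = 1 := by
    intro e
    have h' := playV_caseB σ htrue e
    rw [show 1+e = e+1 by omega]
    exact h'
  have hm : ∀ d : ℕ, List.foldl μ m₀ (G4.histState σ 0 (1+d)).1 = g^[d] m1 := by
    intro d
    induction d with
    | zero => rw [hm1]; rfl
    | succ e ih =>
      have hstep : (G4.histState σ 0 (1+(e+1))).1
          = (G4.histState σ 0 (1+e)).1 ++
            [((G4.histState σ 0 (1+e)).2, σ (G4.histState σ 0 (1+e)).1 (G4.histState σ 0 (1+e)).2)] := by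
        rw [show 1+(e+1) = (1+e)+1 by omega]
        rfl
      rw [hstep, List.foldl_append]
      simp only [List.foldl_cons, List.foldl_nil]
      rw [hv e, hu, ih, Function.iterate_succ_apply']
  have hpa : ∀ d : ℕ, G4.playA σ 0 (1+d) = u (g^[d] m1) 1 := by
    intro d
    show σ (G4.histState σ 0 (1+d)).1 (G4.playV σ 0 (1+d)) = _
    rw [show G4.playV σ 0 (1+d) = (G4.histState σ 0 (1+d)).2 from rfl, hv d, hu, hm d]
  obtain ⟨a, b', hab, heq⟩ := Fintype.exists_ne_map_eq_of_card_lt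
      (fun k : Fin (n+1) => g^[(k:ℕ)] m1) (by simp)
  obtain ⟨aa, bb, hlt, heq2⟩ : ∃ aa bb : ℕ, aa < bb ∧ g^[aa] m1 = g^[bb] m1 := by
    rcases lt_or_gt_of_ne hab with hl | hl
    · exact ⟨a, b', hl, heq⟩
    · exact ⟨b', a, hl, heq.symm⟩
  set q := bb - aa with hq
  have hper' : ∀ d, aa ≤ d → g^[d + q] m1 = g^[d] m1 := by
    intro d hd
    rw [show d + q = (d - aa) + bb by omega, Function.iterate_add_apply, ← heq2,
      ← Function.iterate_add_apply, show (d - aa) + aa = d by omega]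
  have hsper : ∀ k, aa + 1 ≤ k → G4.playA σ 0 (k + q) = G4.playA σ 0 k := by
    intro k hk
    rw [show k + q = 1 + ((k-1) + q) by omega, hpa, hper' (k-1) (by omega),
      ← hpa, show 1 + (k-1) = k by omega]
  intro hL
  rw [L] at hL
  exact key (fun k => G4.playA σ 0 k) (aa + 1) q (by omega) (by omega) hsper hL

end MDSG4Aux

open MDSG4Aux

open MDSG in
/-- In the game `G₄`: the supremum of the leader's expected reward over all
leader strategy profiles equals `1` and is attained by some leader strategy
profile; however, for every memory bound `b`, every leader strategy profile
with memory bound `b` gives the leader expected reward strictly less than `1`.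
Hence an optimal leader strategy profile of `G₄` requires infinite memory. -/
theorem optimal_leader_SP_needs_infinite_memory :
    (∃ σ : Profile (Fin 3) Bool, G4.IsLeaderSP 1 σ ∧ G4.ER 1 σ = 1) ∧
    (∀ σ : Profile (Fin 3) Bool, G4.IsLeaderSP 1 σ → G4.ER 1 σ ≤ 1) ∧
    (∀ (b : ℕ) (σ : Profile (Fin 3) Bool),
      G4.MemBound σ b → G4.IsLeaderSP 1 σ → G4.ER 1 σ < 1) := by
  refine ⟨⟨σstar, lsp_σstar, ?_⟩, fun σ h => ER1_le_one σ h, ?_⟩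
  · rw [ER1_caseB σstar σstar_zero, L_σstar]
  · intro b σ hmem hlsp
    cases hb : σ [] 0 with
    | false => rw [ER_caseA 1 σ hb]; norm_num
    | true =>
      rw [ER1_caseB σ hb]
      exact lt_of_le_of_ne (L_le_one σ hlsp hb) (memory_L_ne_one b σ hb hmem)
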